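/- Let (S,·) be an (h,m)-semigroup with a chain of ideals S_0 ⊂ S_1 ⊂ ⋯ ⊂ S_h = S as in the definition, such that S_0 = {0} where 0 is the zero of S, and such that S = E(S) ∪ S_1, where E(S) is the set of idempotents of S. Then for every n ≥ 1, the semigroup (S,·) satisfies the semigroup identity v_{n,m}^{(1)} ≈ (v_{n,m}^{(1)})². -/

import Mathlib

universe u v

/-- `spowM x k = x^(k+1)`, the `(k+1)`-st power in a semigroup. -/
def spowM {S : Type*} [Mul S] (x : S) : ℕ → S
  | 0 => x
  | k + 1 => spowM x k * x

/-- `opow gmul a k = a^(k+1)` for an explicit binary operation. -/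
def opow {G : Type*} (gmul : G → G → G) (a : G) : ℕ → G
  | 0 => a
  | k + 1 => gmul (opow gmul a k) a

/-- The subset `T` is an abelian group of exponent dividing `m` under the semigroup
multiplication. -/
def IsAbGroupExp {S : Type*} [Mul S] (m : ℕ) (T : Set S) : Prop :=
  (∀ a ∈ T, ∀ b ∈ T, a * b ∈ T) ∧ (∀ a ∈ T, ∀ b ∈ T, a * b = b * a) ∧
    ∃ e ∈ T, (∀ a ∈ T, e * a = a ∧ a * e = a) ∧ (∀ a ∈ T, ∃ b ∈ T, a * b = e) ∧
      ∀ a ∈ T, spowM a (m - 1) = e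

/-- The Rees quotient `U/T` is a Brandt semigroup over an abelian group of exponent
dividing `m`: the nonzero classes `U \ T` are in a multiplication-respecting bijection with
`ι × G × ι` for some nonempty `ι` and some abelian group `(G, gmul)` of exponent dividing `m`. -/
def IsBrandtFactor {S : Type u} [Mul S] (m : ℕ) (T U : Set S) : Prop :=
  ∃ (ι : Type u) (G : Type u) (gmul : G → G → G) (ge : G),
    Nonempty ι ∧
    (∀ a b c : G, gmul (gmul a b) c = gmul a (gmul b c)) ∧
    (∀ a b : G, gmul a b = gmul b a) ∧
    (∀ a : G, gmul ge a = a) ∧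
    (∀ a : G, ∃ b : G, gmul a b = ge) ∧
    (∀ a : G, opow gmul a (m - 1) = ge) ∧
    ∃ φ : S → ι × G × ι,
      Set.BijOn φ (U \ T) Set.univ ∧
      ∀ a ∈ U \ T, ∀ b ∈ U \ T,
        ((φ a).2.2 = (φ b).1 →
          a * b ∈ U \ T ∧ φ (a * b) = ((φ a).1, gmul (φ a).2.1 (φ b).2.1, (φ b).2.2)) ∧
        ((φ a).2.2 ≠ (φ b).1 → a * b ∈ T)

/-- `C 0 ⊂ C 1 ⊂ ⋯ ⊂ C h = S` is a principal chain of ideals witnessing that the semigroup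
`S` is an `(h,m)`-semigroup: `C 0` is an abelian group of exponent dividing `m` and each
Rees quotient `C (j+1) / C j` is a Brandt semigroup over such a group. -/
structure IsHMChain {S : Type u} [Semigroup S] (h m : ℕ) (C : ℕ → Set S) : Prop where
  chain : ∀ j < h, C j ⊂ C (j + 1)
  ideal : ∀ j ≤ h, (C j).Nonempty ∧ ∀ a ∈ C j, ∀ s : S, a * s ∈ C j ∧ s * a ∈ C j
  top : C h = Set.univ
  base : IsAbGroupExp m (C 0)
  factor : ∀ j < h, IsBrandtFactor m (C j) (C (j + 1))

/-- Evaluation of a (nonempty) word, given as a list of variables, in a magma with an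
explicit binary operation; the empty word evaluates to `none`. -/
def wEval {ι S : Type*} (mul : S → S → S) (ρ : ι → S) : List ι → Option S
  | [] => none
  | a :: l => some (l.foldl (fun s i => mul s (ρ i)) (ρ a))

/-- The word `u_{n,k,m} = x₁⋯x_{n+k}(xₙ⋯x₁·x_{n+1}⋯x_{n+k})^{2m-1}` (variables 0-indexed). -/
def uWord (n k m : ℕ) : List ℕ :=
  List.range (n + k) ++
    (List.replicate (2 * m - 1) ((List.range n).reverse ++ List.range' n k)).flatten

/-- The words `v_{n,m}^{(h)}` (`h ≥ 1`), over variables indexed by `h`-tuples from `{0,…,2n-1}`: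
`v_{n,m}^{(1)} = u_{n,n,m}`, and `v_{n,m}^{(h+1)}` is obtained by substituting, for the `j`-th
variable of `v_{n,m}^{(1)}`, the copy of `v_{n,m}^{(h)}` whose variables get `j` appended. -/
def vWord (n m : ℕ) : ℕ → List (List ℕ)
  | 0 => []
  | 1 => (uWord n n m).map (fun i => [i])
  | h + 2 => (uWord n n m).flatMap (fun j => (vWord n m (h + 1)).map (fun xs => xs ++ [j]))



namespace HMAux

variable {ι : Type*}

/-- `PChain r F t`: the list of pairs `F` forms a chain starting at `r` and ending at `t`. -/
def PChain (r : ι) : List (ι × ι) → ι → Prop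
  | [], t => t = r
  | p :: F, t => r = p.1 ∧ PChain p.2 F t

@[simp] theorem pchain_nil {r t : ι} : PChain r ([] : List (ι × ι)) t ↔ t = r := Iff.rfl

@[simp] theorem pchain_cons {r t : ι} {p : ι × ι} {F : List (ι × ι)} :
    PChain r (p :: F) t ↔ r = p.1 ∧ PChain p.2 F t := Iff.rfl

theorem pchain_append {r t : ι} {L1 L2 : List (ι × ι)} :
    PChain r (L1 ++ L2) t ↔ ∃ x, PChain r L1 x ∧ PChain x L2 t := by
  induction L1 generalizing r with
  | nil =>
    simp only [List.nil_append, pchain_nil]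
    constructor
    · intro h; exact ⟨r, rfl, h⟩
    · rintro ⟨x, rfl, h⟩; exact h
  | cons p F ih =>
    show PChain r (p :: (F ++ L2)) t ↔ _
    simp only [pchain_cons, ih]
    constructor
    · rintro ⟨h1, x, h2, h3⟩; exact ⟨x, ⟨h1, h2⟩, h3⟩
    · rintro ⟨x, ⟨h1, h2⟩, h3⟩; exact ⟨h1, x, h2, h3⟩

theorem pchain_getLast? {r t : ι} {L : List (ι × ι)} (h : PChain r L t) :
    ∀ p, L.getLast? = some p → t = p.2 := by
  induction L generalizing r with
  | nil => intro p hp; simp at hp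
  | cons q F ih =>
    intro p hp
    cases F with
    | nil =>
      simp at hp
      have h2 : t = q.2 := h.2
      rw [h2, hp]
    | cons q' F' =>
      rw [List.getLast?_cons_cons] at hp
      exact ih h.2 p hp

theorem pchain_swaprev {L : List (ι × ι)} : ∀ {c d : ι},
    PChain c L.reverse d ↔ PChain d (L.map Prod.swap) c := by
  induction L with
  | nil =>
    intro c d
    simp only [List.reverse_nil, List.map_nil, pchain_nil]
    exact comm
  | cons p F ih =>
    intro c d
    simp only [List.reverse_cons, List.map_cons, pchain_append, pchain_cons, Prod.fst_swap,
      Prod.snd_swap]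
    constructor
    · rintro ⟨x, h1, h2, h3⟩
      simp only [pchain_nil] at h3
      exact ⟨h3, by rw [← h2]; exact ih.mp h1⟩
    · rintro ⟨h1, h2⟩
      exact ⟨p.1, ih.mpr h2, rfl, by simp only [pchain_nil]; exact h1⟩

theorem pchain_P1 {L : List (ι × ι)} :
    ∀ {a b c : ι}, PChain a L b → PChain c (L.map Prod.swap) b → c = a := by
  induction L with
  | nil =>
    intro a b c h1 h2
    simp only [pchain_nil, List.map_nil] at h1 h2
    rw [← h2, h1]
  | cons p F ih =>
    intro a b c h1 h2
    obtain ⟨ha, h1'⟩ := h1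
    simp only [List.map_cons, pchain_cons, Prod.fst_swap, Prod.snd_swap] at h2
    obtain ⟨hc, h2'⟩ := h2
    have := ih h1' h2'
    rw [hc, ← this, ha]

theorem pchain_P2_loop : ∀ (k : ℕ) (L : List (ι × ι)), L.length ≤ k →
    (∀ a b c : ι, PChain a L b → PChain b (L.map Prod.swap) c → c = a) ∧
    (∀ t x c : ι, PChain t L t → PChain x (L.map Prod.swap) c → c = x) := by
  intro k
  induction k with
  | zero =>
    intro L hL
    rw [Nat.le_zero, List.length_eq_zero_iff] at hL
    subst hL
    constructor
    · intro a b c h1 h2; simp only [pchain_nil, List.map_nil] at h1 h2; rw [h2, h1]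
    · intro t x c h1 h2; simp only [pchain_nil, List.map_nil] at h2; exact h2
  | succ k ih =>
    intro L hL
    cases L with
    | nil =>
      constructor
      · intro a b c h1 h2; simp only [pchain_nil, List.map_nil] at h1 h2; rw [h2, h1]
      · intro t x c h1 h2; simp only [pchain_nil, List.map_nil] at h2; exact h2
    | cons p F =>
      simp only [List.length_cons, Nat.succ_le_succ_iff] at hL
      constructor
      · intro a b c h1 h2
        obtain ⟨ha, h1'⟩ := h1
        simp only [List.map_cons, pchain_cons, Prod.fst_swap, Prod.snd_swap] at h2
        obtain ⟨hb, h2'⟩ := h2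
        rw [hb] at h1'
        have := (ih F hL).2 p.2 p.1 c h1' h2'
        rw [this, ha]
      · intro t x c h1 h2
        obtain ⟨ht, h1'⟩ := h1
        simp only [List.map_cons, pchain_cons, Prod.fst_swap, Prod.snd_swap] at h2
        obtain ⟨hx, h2'⟩ := h2
        rw [ht] at h1'
        have := (ih F hL).1 p.2 p.1 c h1' h2'
        rw [hx, this]

theorem pchain_P2 {L : List (ι × ι)} {a b c : ι}
    (h1 : PChain a L b) (h2 : PChain b (L.map Prod.swap) c) : c = a :=
  (pchain_P2_loop L.length L le_rfl).1 a b c h1 h2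

theorem flatten_replicate_succ {α : Type*} (k : ℕ) (L : List α) :
    (List.replicate (k+1) L).flatten = L ++ (List.replicate k L).flatten := by
  rw [List.replicate_succ, List.flatten_cons]

theorem pchain_rep {L : List (ι × ι)} {y : ι} (hloop : PChain y L y) :
    ∀ (j : ℕ) {t : ι}, PChain y (List.replicate j L).flatten t → t = y := by
  intro j
  induction j with
  | zero => intro t h; simpa using h
  | succ j ih =>
    intro t h
    rw [flatten_replicate_succ, pchain_append] at h
    obtain ⟨mid, h1, h2⟩ := h
    have hmid : mid = y := by
      cases L with
      | nil => simpa using h1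
      | cons p F =>
        have e1 := pchain_getLast? h1 ((p :: F).getLast (by simp)) (List.getLast?_eq_getLast _)
        have e2 := pchain_getLast? hloop ((p :: F).getLast (by simp)) (List.getLast?_eq_getLast _)
        rw [e1, ← e2]
    rw [hmid] at h2
    exact ih h2

/-- Core combinatorial lemma: a chain along `D ++ U ++ (rev D ++ U)^k` returns to its start. -/
theorem pchain_core {D U : List (ι × ι)} {k : ℕ} (hk : 1 ≤ k) {r t : ι}
    (h : PChain r (D ++ U ++ (List.replicate k (D.reverse ++ U)).flatten) t) : t = r := by
  rw [List.append_assoc, pchain_append] at h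
  obtain ⟨x, hD, h⟩ := h
  rw [pchain_append] at h
  obtain ⟨y, hU, h⟩ := h
  obtain ⟨j, rfl⟩ : ∃ j, k = j + 1 := ⟨k - 1, by omega⟩
  rw [flatten_replicate_succ, pchain_append] at h
  obtain ⟨y1, hcopy, hrest⟩ := h
  rw [pchain_append] at hcopy
  obtain ⟨w, hDrev, hU2⟩ := hcopy
  have hswap : PChain w (D.map Prod.swap) y := pchain_swaprev.mp hDrev
  cases U with
  | nil =>
    have hyx : y = x := by simpa using hU
    have hy1w : y1 = w := by simpa using hU2
    rw [hyx] at hswap hDrev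
    have hwr : w = r := pchain_P1 hD hswap
    rw [hy1w, hwr] at hrest
    cases D with
    | nil =>
      have he : (List.replicate j (([] : List (ι × ι)).reverse ++ [])).flatten = [] := by simp
      rw [he] at hrest
      simpa using hrest
    | cons p F =>
      cases j with
      | zero => simpa using hrest
      | succ j' =>
        have hpeel := hrest
        rw [flatten_replicate_succ, pchain_append] at hpeel
        obtain ⟨y2, hcopy2, hrest2⟩ := hpeel
        rw [pchain_append] at hcopy2
        obtain ⟨w2, hDrev2, hU3⟩ := hcopy2
        have hne : ((p :: F).reverse : List (ι × ι)) ≠ [] := by simp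
        obtain ⟨q, M, hqM⟩ := List.exists_cons_of_ne_nil hne
        rw [hqM] at hDrev hDrev2
        have hx : x = q.1 := hDrev.1
        have hr : r = q.1 := hDrev2.1
        have hxr : x = r := by rw [hx, hr]
        have hloop : PChain r ((p :: F).reverse ++ ([] : List (ι × ι))) r := by
          rw [pchain_append]
          refine ⟨r, ?_, by simp⟩
          rw [hqM]
          rw [hxr, hwr] at hDrev
          exact hDrev
        exact pchain_rep hloop (j' + 1) hrest
  | cons u0 U' =>
    have hx : x = u0.1 := hU.1
    have hw : w = u0.1 := hU2.1
    have hlast := List.getLast?_eq_getLast (l := u0 :: U') (by simp)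
    have hy : y = ((u0 :: U').getLast (by simp)).2 := pchain_getLast? hU _ hlast
    have hy1 : y1 = ((u0 :: U').getLast (by simp)).2 := pchain_getLast? hU2 _ hlast
    have hy1y : y1 = y := by rw [hy, hy1]
    have hwx : w = x := by rw [hw, hx]
    rw [hwx] at hswap
    have hyr : y = r := pchain_P2 hD hswap
    have hloop : PChain y (D.reverse ++ (u0 :: U')) y := by
      rw [pchain_append]
      exact ⟨w, hDrev, hy1y ▸ hU2⟩
    rw [hy1y] at hrest
    have := pchain_rep hloop j hrest
    rw [this, hyr]



structure BCtx (S : Type u) [Semigroup S] (m : ℕ) : Type (u+1) where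
  ι : Type u
  G : Type u
  gmul : G → G → G
  ge : G
  z : S
  N : Set S
  φ : S → ι × G × ι
  gassoc : ∀ a b c : G, gmul (gmul a b) c = gmul a (gmul b c)
  gcomm : ∀ a b : G, gmul a b = gmul b a
  gid : ∀ a : G, gmul ge a = a
  ginv : ∀ a : G, ∃ b : G, gmul a b = ge
  gexp : ∀ a : G, opow gmul a (m - 1) = ge
  hm : 1 ≤ m
  hz : ∀ s : S, z * s = z ∧ s * z = z
  hzN : z ∉ N
  hNmul : ∀ p ∈ N, ∀ s : S, (p * s ∈ N ∨ p * s = z) ∧ (s * p ∈ N ∨ s * p = z)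
  hbij : Set.BijOn φ N Set.univ
  hlaw : ∀ a ∈ N, ∀ b ∈ N,
      ((φ a).2.2 = (φ b).1 →
        a * b ∈ N ∧ φ (a * b) = ((φ a).1, gmul (φ a).2.1 (φ b).2.1, (φ b).2.2)) ∧
      ((φ a).2.2 ≠ (φ b).1 → a * b = z)
  hE : ∀ s : S, s * s = s ∨ s ∈ N ∨ s = z

namespace BCtx

variable {S : Type u} [Semigroup S] {m : ℕ} (c : BCtx S m)

noncomputable instance : CommGroup c.G where
  mul := c.gmul
  one := c.ge
  inv := fun a => (c.ginv a).choose
  mul_assoc := c.gassoc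
  one_mul := c.gid
  mul_one := fun a => by show c.gmul a c.ge = a; rw [c.gcomm]; exact c.gid a
  inv_mul_cancel := fun a => by
    show c.gmul (c.ginv a).choose a = c.ge
    rw [c.gcomm]; exact (c.ginv a).choose_spec
  mul_comm := c.gcomm

theorem gmul_def (a b : c.G) : c.gmul a b = a * b := rfl
theorem ge_def : c.ge = 1 := rfl

theorem pow_m (a : c.G) : a ^ m = 1 := by
  have h : ∀ k : ℕ, opow c.gmul a k = a ^ (k + 1) := by
    intro k
    induction k with
    | zero => exact (pow_one a).symm
    | succ k ih =>
      show c.gmul (opow c.gmul a k) a = _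
      rw [ih, gmul_def, ← pow_succ]
  have h2 := c.gexp a
  rw [h] at h2
  rw [Nat.sub_add_cancel c.hm] at h2
  rw [h2, ge_def]

theorem inj {a b : S} (ha : a ∈ c.N) (hb : b ∈ c.N) (h : c.φ a = c.φ b) : a = b :=
  c.hbij.injOn ha hb h

theorem exists_mem (t : c.ι × c.G × c.ι) : ∃ p, p ∈ c.N ∧ c.φ p = t := by
  have := c.hbij.surjOn (Set.mem_univ t)
  obtain ⟨p, hp, hφ⟩ := this
  exact ⟨p, hp, hφ⟩

noncomputable def mk' (t : c.ι × c.G × c.ι) : S := (c.exists_mem t).choose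

theorem mk'_mem (t : c.ι × c.G × c.ι) : c.mk' t ∈ c.N := (c.exists_mem t).choose_spec.1
theorem mk'_phi (t : c.ι × c.G × c.ι) : c.φ (c.mk' t) = t := (c.exists_mem t).choose_spec.2

theorem mul_mem {a b : S} (ha : a ∈ c.N) (hb : b ∈ c.N) (h : (c.φ a).2.2 = (c.φ b).1) :
    a * b ∈ c.N ∧ c.φ (a * b) = ((c.φ a).1, c.gmul (c.φ a).2.1 (c.φ b).2.1, (c.φ b).2.2) :=
  (c.hlaw a ha b hb).1 h

theorem mul_z {a b : S} (ha : a ∈ c.N) (hb : b ∈ c.N) (h : (c.φ a).2.2 ≠ (c.φ b).1) :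
    a * b = c.z :=
  (c.hlaw a ha b hb).2 h

/-- left multiplication preserves the left index. -/
theorem L_mul {p : S} (hp : p ∈ c.N) (s : S) (hps : p * s ∈ c.N) :
    (c.φ (p * s)).1 = (c.φ p).1 := by
  set u := c.mk' ((c.φ p).1, c.ge, (c.φ p).1) with hu
  have hum := c.mk'_mem ((c.φ p).1, c.ge, (c.φ p).1)
  have huφ := c.mk'_phi ((c.φ p).1, c.ge, (c.φ p).1)
  have h1 := c.mul_mem hum hp (by rw [huφ])
  have hup : u * p = p := by
    refine c.inj h1.1 hp ?_
    rw [h1.2, huφ, c.gid]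
  have h2 : u * (p * s) = p * s := by rw [← mul_assoc, hup]
  by_contra hne
  have hz' := c.mul_z hum hps (by rw [huφ]; exact fun hh => hne hh.symm)
  rw [h2] at hz'
  exact c.hzN (hz' ▸ hps)

theorem R_mul {p : S} (hp : p ∈ c.N) (s : S) (hsp : s * p ∈ c.N) :
    (c.φ (s * p)).2.2 = (c.φ p).2.2 := by
  set u := c.mk' ((c.φ p).2.2, c.ge, (c.φ p).2.2) with hu
  have hum := c.mk'_mem ((c.φ p).2.2, c.ge, (c.φ p).2.2)
  have huφ := c.mk'_phi ((c.φ p).2.2, c.ge, (c.φ p).2.2)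
  have h1 := c.mul_mem hp hum (by rw [huφ])
  have hpu : p * u = p := by
    refine c.inj h1.1 hp ?_
    rw [h1.2, huφ]
    show ((c.φ p).1, c.gmul (c.φ p).2.1 c.ge, (c.φ p).2.2) = c.φ p
    rw [gmul_def, ge_def, mul_one]
  have h2 : (s * p) * u = s * p := by rw [mul_assoc, hpu]
  by_contra hne
  have hz' := c.mul_z hsp hum (by rw [huφ]; exact hne)
  rw [h2] at hz'
  exact c.hzN (hz' ▸ hsp)

/-- the adjoint lemma: if `p * x ∈ N` then `x` acts on the left of suitable elements. -/
theorem adj {p x u : S} (hp : p ∈ c.N) (hpx : p * x ∈ c.N) (hu : u ∈ c.N)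
    (h1 : (c.φ u).1 = (c.φ (p * x)).2.2) :
    x * u ∈ c.N ∧ (c.φ (x * u)).1 = (c.φ p).2.2 ∧ (c.φ (x * u)).2.2 = (c.φ u).2.2 ∧
      c.gmul (c.φ p).2.1 (c.φ (x * u)).2.1 = c.gmul (c.φ (p * x)).2.1 (c.φ u).2.1 := by
  have hpxu := c.mul_mem hpx hu h1.symm
  have hassoc : p * (x * u) = (p * x) * u := (mul_assoc p x u).symm
  have hxu : x * u ∈ c.N := by
    rcases (c.hNmul u hu x).2 with h | h
    · exact h
    · exfalso
      have : p * (x * u) = c.z := by rw [h]; exact (c.hz p).2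
      rw [hassoc] at this
      exact c.hzN (this ▸ hpxu.1)
  have hLxu : (c.φ (x * u)).1 = (c.φ p).2.2 := by
    by_contra hne
    have hz' := c.mul_z hp hxu (fun hh => hne hh.symm)
    rw [hassoc] at hz'
    exact c.hzN (hz' ▸ hpxu.1)
  have hmm := c.mul_mem hp hxu hLxu.symm
  rw [hassoc] at hmm
  have heq : c.φ ((p * x) * u) = _ := hmm.2
  rw [hpxu.2] at heq
  have e2 : c.gmul (c.φ p).2.1 (c.φ (x * u)).2.1 = c.gmul (c.φ (p * x)).2.1 (c.φ u).2.1 := by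
    have := congrArg (fun q => q.2.1) heq
    exact this.symm
  have e3 : (c.φ (x * u)).2.2 = (c.φ u).2.2 := by
    have := congrArg (fun q => q.2.2) heq
    exact this.symm
  exact ⟨hxu, hLxu, e3, e2⟩

/-- transfer of the right action along elements with equal right index. -/
theorem transfer {p q x : S} (hp : p ∈ c.N) (hq : q ∈ c.N)
    (hR : (c.φ p).2.2 = (c.φ q).2.2) (hpx : p * x ∈ c.N) :
    q * x ∈ c.N ∧ (c.φ (q * x)).2.2 = (c.φ (p * x)).2.2 ∧ (c.φ (q * x)).1 = (c.φ q).1 ∧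
      c.gmul (c.φ p).2.1 (c.φ (q * x)).2.1 = c.gmul (c.φ q).2.1 (c.φ (p * x)).2.1 := by
  set u := c.mk' ((c.φ (p * x)).2.2, c.ge, (c.φ (p * x)).2.2) with hud
  have hum := c.mk'_mem ((c.φ (p * x)).2.2, c.ge, (c.φ (p * x)).2.2)
  have huφ := c.mk'_phi ((c.φ (p * x)).2.2, c.ge, (c.φ (p * x)).2.2)
  obtain ⟨hxu, hLxu, hRxu, hgxu⟩ := c.adj hp hpx hum (by rw [huφ])
  have hqxu := c.mul_mem hq hxu (by rw [hLxu, hR])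
  have hassoc : q * (x * u) = (q * x) * u := (mul_assoc q x u).symm
  have hqx : q * x ∈ c.N := by
    rcases (c.hNmul q hq x).1 with h | h
    · exact h
    · exfalso
      have : (q * x) * u = c.z := by rw [h]; exact (c.hz u).1
      rw [← hassoc] at this
      exact c.hzN (this ▸ hqxu.1)
  have hqxRu : (c.φ (q * x)).2.2 = (c.φ u).1 := by
    by_contra hne
    have hz' := c.mul_z hqx hum hne
    rw [← hassoc] at hz'
    exact c.hzN (hz' ▸ hqxu.1)
  have hR2 : (c.φ (q * x)).2.2 = (c.φ (p * x)).2.2 := by rw [hqxRu, huφ]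
  have hmm2 := c.mul_mem hqx hum hqxRu
  rw [← hassoc] at hmm2
  -- φ (q * (x*u)) computed two ways
  have heq : ((c.φ q).1, c.gmul (c.φ q).2.1 (c.φ (x*u)).2.1, (c.φ (x*u)).2.2)
      = ((c.φ (q*x)).1, c.gmul (c.φ (q*x)).2.1 (c.φ u).2.1, (c.φ u).2.2) := by
    rw [← hqxu.2, ← hmm2.2]
  have eL : (c.φ (q * x)).1 = (c.φ q).1 := (congrArg (fun t => t.1) heq).symm
  have eg : c.gmul (c.φ q).2.1 (c.φ (x*u)).2.1 = c.gmul (c.φ (q*x)).2.1 (c.φ u).2.1 :=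
    congrArg (fun t => t.2.1) heq
  -- weights
  have hg : c.gmul (c.φ p).2.1 (c.φ (q * x)).2.1 = c.gmul (c.φ q).2.1 (c.φ (p * x)).2.1 := by
    have h1 : (c.φ u).2.1 = (1 : c.G) := by rw [huφ]; rfl
    rw [h1] at eg
    rw [gmul_def, gmul_def] at eg ⊢
    rw [gmul_def] at hgxu
    -- eg : g q * g (x*u) = g (q*x) * 1 ; hgxu : g p * g (x*u) = gmul (g (p*x)) (g u) with g u = 1
    have h2 : (c.φ (q*x)).2.1 = (c.φ q).2.1 * (c.φ (x*u)).2.1 := by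
      rw [eg, mul_one]
    have h3 : (c.φ p).2.1 * (c.φ (x*u)).2.1 = (c.φ (p*x)).2.1 := by
      rw [hgxu, gmul_def, h1, mul_one]
    rw [h2, ← h3, mul_left_comm]
  exact ⟨hqx, hR2, eL, hg⟩

/-- If `x` is idempotent then right multiplication by `x` fixes elements of `N` it maps to `N`. -/
theorem idem_fix {p x : S} (hx : x * x = x) (hp : p ∈ c.N) (hpx : p * x ∈ c.N) :
    p * x = p := by
  have hqx : (p * x) * x ∈ c.N ∧ (p * x) * x = p * x := by
    have : (p * x) * x = p * x := by rw [mul_assoc, hx]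
    exact ⟨by rw [this]; exact hpx, this⟩
  set u := c.mk' ((c.φ (p * x)).2.2, c.ge, (c.φ (p * x)).2.2) with hud
  have hum := c.mk'_mem ((c.φ (p * x)).2.2, c.ge, (c.φ (p * x)).2.2)
  have huφ := c.mk'_phi ((c.φ (p * x)).2.2, c.ge, (c.φ (p * x)).2.2)
  obtain ⟨hxu1, hL1, hR1, hg1⟩ := c.adj hp hpx hum (by rw [huφ])
  obtain ⟨hxu2, hL2, hR2, hg2⟩ := c.adj hpx hqx.1 hum (by rw [huφ, hqx.2])
  -- hL1 : L (x*u) = R p ; hL2 : L (x*u) = R (p*x)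
  have hRR : (c.φ (p * x)).2.2 = (c.φ p).2.2 := by rw [← hL2, hL1]
  have hgg : (c.φ (p * x)).2.1 = (c.φ p).2.1 := by
    rw [hqx.2] at hg2
    -- hg1 : g p * g(x*u) = g (p*x) * g u ; hg2 : g (p*x) * g (x*u) = g (p*x) * g u
    rw [gmul_def, gmul_def] at hg1 hg2
    have : (c.φ p).2.1 * (c.φ (x * u)).2.1 = (c.φ (p*x)).2.1 * (c.φ (x * u)).2.1 := by
      rw [hg1, hg2]
    exact (mul_right_cancel this).symm
  have hLL : (c.φ (p * x)).1 = (c.φ p).1 := c.L_mul hp x hpx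
  refine c.inj hpx hp ?_
  have : c.φ (p * x) = ((c.φ (p*x)).1, (c.φ (p*x)).2.1, (c.φ (p*x)).2.2) := rfl
  rw [this, hLL, hgg, hRR]

open Classical in
/-- The right action of an arbitrary element `x` on the index `r`. -/
noncomputable def act (x : S) (r : c.ι) : Option (c.ι × c.G) :=
  if _ : (c.mk' (r, c.ge, r)) * x ∈ c.N
  then some ((c.φ (c.mk' (r, c.ge, r) * x)).2.2, (c.φ (c.mk' (r, c.ge, r) * x)).2.1)
  else none

theorem act_eq {q x : S} (hq : q ∈ c.N) (hqx : q * x ∈ c.N) :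
    ∃ δ, c.act x ((c.φ q).2.2) = some ((c.φ (q * x)).2.2, δ) ∧
      (c.φ (q * x)).2.1 = c.gmul (c.φ q).2.1 δ := by
  classical
  set r := (c.φ q).2.2 with hr
  set p := c.mk' (r, c.ge, r) with hpd
  have hpm := c.mk'_mem (r, c.ge, r)
  have hpφ := c.mk'_phi (r, c.ge, r)
  obtain ⟨hpx, hRR, hLL, hgg⟩ := c.transfer hq hpm (by rw [hpφ]) hqx
  have hact : c.act x r = some ((c.φ (p * x)).2.2, (c.φ (p * x)).2.1) := by
    rw [act, dif_pos hpx]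
  refine ⟨(c.φ (p * x)).2.1, ?_, ?_⟩
  · rw [hact, hRR]
  · -- hgg : g q * g (p*x) = g p * g (q*x), g p = 1
    rw [gmul_def, gmul_def, hpφ] at hgg
    have h1 : ((r, c.ge, r) : c.ι × c.G × c.ι).2.1 = (1 : c.G) := rfl
    rw [h1, one_mul] at hgg
    rw [gmul_def, ← hgg]

theorem act_none {q x : S} (hq : q ∈ c.N) (hqx : q * x = c.z) :
    c.act x ((c.φ q).2.2) = none := by
  classical
  set r := (c.φ q).2.2 with hr
  have hpm := c.mk'_mem (r, c.ge, r)
  have hpφ := c.mk'_phi (r, c.ge, r)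
  rw [act]
  rw [dif_neg]
  intro hpx
  have := (c.transfer hpm hq (by rw [hpφ]) hpx).1
  rw [hqx] at this
  exact c.hzN this

theorem act_some_imp {q x : S} (hq : q ∈ c.N) {t : c.ι} {δ : c.G}
    (h : c.act x ((c.φ q).2.2) = some (t, δ)) : q * x ∈ c.N := by
  rcases (c.hNmul q hq x).1 with h' | h'
  · exact h'
  · rw [c.act_none hq h'] at h; exact absurd h (by simp)

noncomputable def fold : List S → c.ι → Option (c.ι × c.G)
  | [], r => some (r, c.ge)
  | x :: xs, r => (c.act x r).bind fun p => (fold xs p.1).map fun q2 => (q2.1, c.gmul p.2 q2.2)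

theorem fold_nil (r : c.ι) : c.fold [] r = some (r, c.ge) := rfl
theorem fold_cons (x : S) (xs : List S) (r : c.ι) :
    c.fold (x :: xs) r =
      (c.act x r).bind fun p => (c.fold xs p.1).map fun q2 => (q2.1, c.gmul p.2 q2.2) := rfl

theorem foldl_zero (xs : List S) : List.foldl (· * ·) c.z xs = c.z := by
  induction xs with
  | nil => rfl
  | cons x xs ih => rw [List.foldl_cons, (c.hz x).1, ih]

theorem fold_def {q : S} (hq : q ∈ c.N) : ∀ {xs : List S},
    List.foldl (· * ·) q xs ∈ c.N → ∃ t δ, c.fold xs ((c.φ q).2.2) = some (t, δ) := by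
  intro xs
  induction xs generalizing q with
  | nil => intro _; exact ⟨(c.φ q).2.2, c.ge, rfl⟩
  | cons x xs ih =>
    intro h
    rw [List.foldl_cons] at h
    rcases (c.hNmul q hq x).1 with hqx | hqx
    · obtain ⟨δ, hact, -⟩ := c.act_eq hq hqx
      obtain ⟨t, δ2, hf⟩ := ih hqx h
      refine ⟨t, c.gmul δ δ2, ?_⟩
      rw [fold_cons, hact, Option.bind_some, hf]
      rfl
    · rw [hqx, c.foldl_zero] at h
      exact absurd h c.hzN

theorem fold_run {q : S} (hq : q ∈ c.N) : ∀ {xs : List S} {t : c.ι} {δ : c.G},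
    c.fold xs ((c.φ q).2.2) = some (t, δ) →
      List.foldl (· * ·) q xs ∈ c.N ∧
        c.φ (List.foldl (· * ·) q xs) = ((c.φ q).1, c.gmul (c.φ q).2.1 δ, t) := by
  intro xs
  induction xs generalizing q with
  | nil =>
    intro t δ h
    rw [fold_nil] at h
    have h' : ((c.φ q).2.2, c.ge) = (t, δ) := Option.some.inj h
    have h1 : (c.φ q).2.2 = t := congrArg Prod.fst h'
    have h2 : c.ge = δ := congrArg Prod.snd h'
    rw [List.foldl_nil]
    refine ⟨hq, ?_⟩
    rw [← h1, ← h2, gmul_def, ge_def, mul_one]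
  | cons x xs ih =>
    intro t δ h
    rw [fold_cons] at h
    obtain ⟨p1, hact, hmap⟩ := Option.bind_eq_some_iff.mp h
    obtain ⟨q2, hf, heq⟩ := Option.map_eq_some_iff.mp hmap
    have hqx : q * x ∈ c.N := c.act_some_imp hq hact
    obtain ⟨δ1, hact', hg1⟩ := c.act_eq hq hqx
    rw [hact'] at hact
    obtain ⟨hp11, hp12⟩ : (c.φ (q * x)).2.2 = p1.1 ∧ δ1 = p1.2 := by
      simp only [Option.some.injEq] at hact
      exact ⟨congrArg Prod.fst hact, congrArg Prod.snd hact⟩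
    rw [← hp11] at hf
    obtain ⟨hN, hφ⟩ := ih hqx hf
    rw [List.foldl_cons]
    refine ⟨hN, ?_⟩
    rw [hφ, c.L_mul hq x hqx, hg1, hp12]
    have : t = q2.1 ∧ δ = c.gmul p1.2 q2.2 := by
      simp only [Prod.mk.injEq] at heq
      exact ⟨heq.1.symm, heq.2.symm⟩
    obtain ⟨ht, hδ⟩ := this
    rw [ht, hδ, c.gassoc]

-- (appended to BCtx namespace) PART 3
theorem classify (x : S) : ∃ (w : c.G) (o : Option (c.ι × c.ι)),
    (∀ r t δ, c.act x r = some (t, δ) → δ = w) ∧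
    (o = none → ∀ r t δ, c.act x r = some (t, δ) → t = r) ∧
    (∀ s t0, o = some (s, t0) → ∀ r t δ, c.act x r = some (t, δ) → r = s ∧ t = t0) := by
  classical
  have hsome : ∀ r t δ, c.act x r = some (t, δ) → (c.mk' (r, c.ge, r)) * x ∈ c.N ∧
      t = (c.φ (c.mk' (r, c.ge, r) * x)).2.2 ∧ δ = (c.φ (c.mk' (r, c.ge, r) * x)).2.1 := by
    intro r t δ h
    by_cases hP : (c.mk' (r, c.ge, r)) * x ∈ c.N
    · rw [act, dif_pos hP] at h
      have h' := Option.some.inj h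
      exact ⟨hP, (congrArg Prod.fst h').symm, (congrArg Prod.snd h').symm⟩
    · rw [act, dif_neg hP] at h; exact absurd h (by simp)
  by_cases hx : x ∈ c.N
  · have hNcase : ∀ r t δ, c.act x r = some (t, δ) →
        r = (c.φ x).1 ∧ t = (c.φ x).2.2 ∧ δ = (c.φ x).2.1 := by
      intro r t δ h
      obtain ⟨hP, ht, hδ⟩ := hsome r t δ h
      have hpm := c.mk'_mem (r, c.ge, r)
      have hpφ := c.mk'_phi (r, c.ge, r)
      have hr : r = (c.φ x).1 := by
        by_contra hne
        have hzz := c.mul_z hpm hx (by rw [hpφ]; exact hne)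
        rw [hzz] at hP; exact c.hzN hP
      have hmm := c.mul_mem hpm hx (by rw [hpφ]; exact hr)
      refine ⟨hr, ?_, ?_⟩
      · rw [ht, hmm.2]
      · rw [hδ, hmm.2]
        show c.gmul (c.φ (c.mk' (r, c.ge, r))).2.1 (c.φ x).2.1 = (c.φ x).2.1
        rw [hpφ]
        exact c.gid _
    refine ⟨(c.φ x).2.1, some ((c.φ x).1, (c.φ x).2.2),
      fun r t δ h => (hNcase r t δ h).2.2, fun hno => absurd hno (by simp), ?_⟩
    intro s t0 hso r t δ h
    have h' := Option.some.inj hso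
    have hs : (c.φ x).1 = s := congrArg Prod.fst h'
    have ht0 : (c.φ x).2.2 = t0 := congrArg Prod.snd h'
    obtain ⟨e1, e2, -⟩ := hNcase r t δ h
    exact ⟨by rw [e1, hs], by rw [e2, ht0]⟩
  · rcases c.hE x with hxx | hxN | hxz
    · have hIcase : ∀ r t δ, c.act x r = some (t, δ) → t = r ∧ δ = c.ge := by
        intro r t δ h
        obtain ⟨hP, ht, hδ⟩ := hsome r t δ h
        have hfix := c.idem_fix hxx (c.mk'_mem (r, c.ge, r)) hP
        rw [hfix] at ht hδ
        rw [c.mk'_phi (r, c.ge, r)] at ht hδ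
        exact ⟨ht, hδ⟩
      exact ⟨c.ge, none, fun r t δ h => (hIcase r t δ h).2,
        fun _ r t δ h => (hIcase r t δ h).1, fun s t0 hso => absurd hso (by simp)⟩
    · exact absurd hxN hx
    · have hZcase : ∀ r t δ, c.act x r = some (t, δ) → False := by
        intro r t δ h
        obtain ⟨hP, -, -⟩ := hsome r t δ h
        rw [hxz, (c.hz (c.mk' (r, c.ge, r))).2] at hP
        exact c.hzN hP
      exact ⟨c.ge, none, fun r t δ h => absurd h (fun hh => hZcase r t δ hh),
        fun _ r t δ h => absurd h (fun hh => hZcase r t δ hh),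
        fun s t0 hso => absurd hso (by simp)⟩

noncomputable def wtf (x : S) : c.G := (c.classify x).choose
noncomputable def skf (x : S) : Option (c.ι × c.ι) := (c.classify x).choose_spec.choose

theorem wtf_spec {x : S} {r t : c.ι} {δ : c.G} (h : c.act x r = some (t, δ)) : δ = c.wtf x :=
  (c.classify x).choose_spec.choose_spec.1 r t δ h

theorem skf_none {x : S} (h : c.skf x = none) {r t : c.ι} {δ : c.G}
    (hh : c.act x r = some (t, δ)) : t = r :=
  (c.classify x).choose_spec.choose_spec.2.1 h r t δ hh

theorem skf_some {x : S} {s t0 : c.ι} (h : c.skf x = some (s, t0)) {r t : c.ι} {δ : c.G}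
    (hh : c.act x r = some (t, δ)) : r = s ∧ t = t0 :=
  (c.classify x).choose_spec.choose_spec.2.2 s t0 h r t δ hh

theorem fold_chain : ∀ (xs : List S) (r t : c.ι) (δ : c.G),
    c.fold xs r = some (t, δ) → PChain r (xs.filterMap c.skf) t := by
  intro xs
  induction xs with
  | nil =>
    intro r t δ h
    rw [fold_nil] at h
    have h' := Option.some.inj h
    have : r = t := congrArg Prod.fst h'
    simp only [List.filterMap_nil, pchain_nil]
    exact this.symm
  | cons x xs ih =>
    intro r t δ h
    rw [fold_cons] at h
    obtain ⟨p1, hact, hmap⟩ := Option.bind_eq_some_iff.mp h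
    obtain ⟨q2, hf, heq⟩ := Option.map_eq_some_iff.mp hmap
    have ht : t = q2.1 := (congrArg Prod.fst heq).symm
    have hact' : c.act x r = some (p1.1, p1.2) := by rw [hact]
    cases hsk : c.skf x with
    | none =>
      simp only [List.filterMap_cons, hsk]
      have h1 : p1.1 = r := c.skf_none hsk hact'
      have := ih p1.1 q2.1 q2.2 (by rw [hf])
      rw [h1] at this
      rw [ht]
      exact this
    | some st =>
      simp only [List.filterMap_cons, hsk]
      obtain ⟨h1, h2⟩ := c.skf_some (by rw [hsk] : c.skf x = some (st.1, st.2)) hact'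
      refine ⟨h1, ?_⟩
      have := ih p1.1 q2.1 q2.2 (by rw [hf])
      rw [h2] at this
      rw [ht]
      exact this

theorem fold_weight : ∀ (xs : List S) (r t : c.ι) (δ : c.G),
    c.fold xs r = some (t, δ) → δ = (xs.map c.wtf).prod := by
  intro xs
  induction xs with
  | nil =>
    intro r t δ h
    rw [fold_nil] at h
    have h' := Option.some.inj h
    have : c.ge = δ := congrArg Prod.snd h'
    rw [← this, List.map_nil, List.prod_nil, ge_def]
  | cons x xs ih =>
    intro r t δ h
    rw [fold_cons] at h
    obtain ⟨p1, hact, hmap⟩ := Option.bind_eq_some_iff.mp h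
    obtain ⟨q2, hf, heq⟩ := Option.map_eq_some_iff.mp hmap
    have hδ : δ = c.gmul p1.2 q2.2 := (congrArg Prod.snd heq).symm
    have hact' : c.act x r = some (p1.1, p1.2) := by rw [hact]
    have h1 : p1.2 = c.wtf x := c.wtf_spec hact'
    have h2 : q2.2 = (xs.map c.wtf).prod := ih p1.1 q2.1 q2.2 (by rw [hf])
    rw [hδ, h1, h2, List.map_cons, List.prod_cons, gmul_def]


end BCtx

-- PART 4 : word lemmas (inside HMAux, outside BCtx) and main theorem
theorem filterMap_flatten_rep {α β : Type*} (f : α → Option β) (k : ℕ) (L : List α) :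
    ((List.replicate k L).flatten).filterMap f = (List.replicate k (L.filterMap f)).flatten := by
  induction k with
  | zero => simp
  | succ k ih => rw [flatten_replicate_succ, flatten_replicate_succ, List.filterMap_append, ih]

theorem map_flatten_rep {α β : Type*} (f : α → β) (k : ℕ) (L : List α) :
    ((List.replicate k L).flatten).map f = (List.replicate k (L.map f)).flatten := by
  induction k with
  | zero => simp
  | succ k ih => rw [flatten_replicate_succ, flatten_replicate_succ, List.map_append, ih]

theorem prod_flatten_rep {M : Type*} [CommMonoid M] (k : ℕ) (L : List M) :
    ((List.replicate k L).flatten).prod = L.prod ^ k := by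
  induction k with
  | zero => simp
  | succ k ih => rw [flatten_replicate_succ, List.prod_append, ih, ← pow_succ']

theorem range_split (n : ℕ) : List.range (n + n) = List.range n ++ List.range' n n := by
  rw [List.range_eq_range', List.range_eq_range']
  have h := (List.range'_append (s := 0) (m := n) (n := n) (step := 1)).symm
  simpa using h

namespace BCtx
variable {S : Type u} [Semigroup S] {m : ℕ}

theorem word_prod_one (c : BCtx S m) (f : ℕ → c.G) (n : ℕ) :
    ((uWord n n m).map f).prod = 1 := by
  have hQ : (((List.range n).reverse ++ List.range' n n).map f).prod
      = ((List.range (n + n)).map f).prod := by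
    rw [List.map_append, List.prod_append, List.map_reverse, List.prod_reverse,
      range_split, List.map_append, List.prod_append]
  rw [uWord, List.map_append, List.prod_append, map_flatten_rep, prod_flatten_rep, hQ]
  rw [← pow_succ']
  have h2 : ((List.range (n + n)).map f).prod ^ (2 * m - 1 + 1)
      = (((List.range (n + n)).map f).prod ^ m) ^ 2 := by
    rw [← pow_mul]
    congr 1
    have hm' := c.hm
    omega
  rw [h2, c.pow_m, one_pow]

theorem main (c : BCtx S m) (n : ℕ) (a : ℕ → S) (V : S)
    (hfold : ∀ u : S, List.foldl (· * ·) u ((uWord n n m).map a) = u * V)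
    (hV : V ∈ c.N) : V * V = V := by
  classical
  have hum := c.mk'_mem ((c.φ V).1, c.ge, (c.φ V).1)
  have huφ := c.mk'_phi ((c.φ V).1, c.ge, (c.φ V).1)
  set u := c.mk' ((c.φ V).1, c.ge, (c.φ V).1) with hud
  have huV : u * V = V := by
    have h1 := c.mul_mem hum hV (by rw [huφ])
    refine c.inj h1.1 hV ?_
    rw [h1.2, huφ, c.gid]
  have h1 : List.foldl (· * ·) u ((uWord n n m).map a) = V := by rw [hfold u, huV]
  have hfoldN : List.foldl (· * ·) u ((uWord n n m).map a) ∈ c.N := by rw [h1]; exact hV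
  obtain ⟨t, δ, hf⟩ := c.fold_def hum hfoldN
  obtain ⟨hN2, hφ2⟩ := c.fold_run hum hf
  rw [h1] at hφ2
  have hLu : (c.φ u).1 = (c.φ V).1 := by rw [huφ]
  have hgu : (c.φ u).2.1 = c.ge := by rw [huφ]
  rw [hLu, hgu, c.gid] at hφ2
  have ht : (c.φ V).2.2 = t := congrArg (fun v => v.2.2) hφ2
  have hδ : (c.φ V).2.1 = δ := congrArg (fun v => v.2.1) hφ2
  have hRu : (c.φ u).2.2 = (c.φ V).1 := by rw [huφ]
  -- index part
  have hch := c.fold_chain ((uWord n n m).map a) ((c.φ u).2.2) t δ hf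
  rw [hRu, List.filterMap_map] at hch
  have hdecomp : (uWord n n m).filterMap (c.skf ∘ a)
      = ((List.range n).filterMap (c.skf ∘ a) ++ (List.range' n n).filterMap (c.skf ∘ a))
        ++ (List.replicate (2 * m - 1)
            (((List.range n).filterMap (c.skf ∘ a)).reverse
              ++ (List.range' n n).filterMap (c.skf ∘ a))).flatten := by
    rw [uWord, List.filterMap_append, range_split, List.filterMap_append,
      filterMap_flatten_rep, List.filterMap_append, List.filterMap_reverse]
  rw [hdecomp] at hch
  have hidx : t = (c.φ V).1 := pchain_core (by have := c.hm; omega : 1 ≤ 2 * m - 1) hch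
  -- weight part
  have hwt := c.fold_weight ((uWord n n m).map a) ((c.φ u).2.2) t δ hf
  rw [List.map_map] at hwt
  rw [c.word_prod_one (c.wtf ∘ a) n] at hwt
  -- conclude
  have hmatch : (c.φ V).2.2 = (c.φ V).1 := by rw [ht, hidx]
  have hgV : (c.φ V).2.1 = c.ge := by rw [hδ, hwt, ge_def]
  have h2 := c.mul_mem hV hV hmatch
  refine c.inj h2.1 hV ?_
  rw [h2.2, hgV, c.gid]
  conv_rhs => rw [show c.φ V = ((c.φ V).1, (c.φ V).2.1, (c.φ V).2.2) from rfl, hgV]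

end BCtx

end HMAux

/-- Let `S` be an `(h,m)`-semigroup with chain of ideals `C` such that
`C 0 = {z}` with `z` the zero of `S` and every element of `S` is an idempotent or lies in
`C 1`. Then for every `n ≥ 1`, `S` satisfies `v_{n,m}^{(1)} ≈ (v_{n,m}^{(1)})²`. -/
theorem hm_semigroup_satisfies_v1_identity {S : Type u} [Semigroup S] (h m : ℕ)
    (hh : 1 ≤ h) (hm : 1 ≤ m) (C : ℕ → Set S) (hchain : IsHMChain h m C)
    (z : S) (hz : C 0 = {z}) (hzero : ∀ s : S, z * s = z ∧ s * z = z)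
    (hES : ∀ s : S, s * s = s ∨ s ∈ C 1) :
    ∀ n, 1 ≤ n → ∀ ρ : List ℕ → S,
      wEval (· * ·) ρ (vWord n m 1) = wEval (· * ·) ρ (vWord n m 1 ++ vWord n m 1) := by
  intro n hn ρ
  have hvw : vWord n m 1 = (uWord n n m).map (fun i => [i]) := rfl
  have hlen : 0 < (uWord n n m).length := by
    rw [uWord, List.length_append, List.length_range]
    omega
  obtain ⟨w0, Wt, hW⟩ := List.exists_cons_of_ne_nil (List.ne_nil_of_length_pos hlen)
  have foldl_assoc : ∀ (l : List S) (x y : S),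
      List.foldl (· * ·) (x * y) l = x * List.foldl (· * ·) y l := by
    intro l
    induction l with
    | nil => intro x y; rfl
    | cons b l ih =>
      intro x y
      rw [List.foldl_cons, List.foldl_cons, mul_assoc]
      exact ih x (y * b)
  have hconv : ∀ (l : List ℕ) (x : S),
      List.foldl (fun s i => s * ρ i) x (l.map (fun i => [i]))
        = List.foldl (· * ·) x (l.map (fun i => ρ [i])) := by
    intro l x
    rw [List.foldl_map, List.foldl_map]
  set V : S := List.foldl (· * ·) (ρ [w0]) (Wt.map (fun i => ρ [i])) with hVdef
  have hfold : ∀ u : S, List.foldl (· * ·) u ((uWord n n m).map (fun i => ρ [i])) = u * V := by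
    intro u
    rw [hW, List.map_cons, List.foldl_cons]
    exact foldl_assoc _ u (ρ [w0])
  have hgoalL : wEval (· * ·) ρ (vWord n m 1) = some V := by
    rw [hvw, hW, List.map_cons]
    show some (List.foldl (fun s i => s * ρ i) (ρ [w0]) (Wt.map (fun i => [i]))) = some V
    rw [hconv Wt (ρ [w0])]
  have hgoalR : wEval (· * ·) ρ (vWord n m 1 ++ vWord n m 1) = some (V * V) := by
    rw [hvw, hW, List.map_cons, List.cons_append]
    show some (List.foldl (fun s i => s * ρ i) (ρ [w0])
      (Wt.map (fun i => [i]) ++ ([w0] :: Wt.map (fun i => [i])))) = some (V * V)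
    rw [List.foldl_append, hconv Wt (ρ [w0])]
    rw [show ([w0] :: Wt.map (fun i => ([i] : List ℕ))) = (w0 :: Wt).map (fun i => [i]) from rfl]
    rw [hconv (w0 :: Wt) V, ← hW, hfold V]
  rw [hgoalL, hgoalR]
  suffices hidem : V * V = V by rw [hidem]
  rcases hES V with hid | hC1
  · exact hid
  by_cases hVz : V = z
  · rw [hVz]; exact (hzero z).1
  obtain ⟨ι, G, gmul, ge, hι, hassoc, hcomm, hgid, hginv, hgexp, φ, hbij, hlawS⟩ :=
    hchain.factor 0 hh
  have hC0z : ∀ x : S, x ∈ C 0 ↔ x = z := by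
    intro x; rw [hz]; exact Set.mem_singleton_iff
  have hsplit : ∀ p : S, p ∈ C 1 → p ∈ C 1 \ C 0 ∨ p = z := by
    intro p hp
    by_cases h0 : p ∈ C 0
    · right; exact (hC0z p).mp h0
    · left; exact ⟨hp, h0⟩
  have hideal := (hchain.ideal 1 hh).2
  let c : HMAux.BCtx S m :=
    { ι := ι, G := G, gmul := gmul, ge := ge, z := z, N := C 1 \ C 0, φ := φ,
      gassoc := hassoc, gcomm := hcomm, gid := hgid, ginv := hginv, gexp := hgexp,
      hm := hm,
      hz := hzero,
      hzN := fun hmem => hmem.2 ((hC0z z).mpr rfl),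
      hNmul := by
        intro p hp s
        obtain ⟨h1, h2⟩ := hideal p hp.1 s
        exact ⟨hsplit _ h1, hsplit _ h2⟩,
      hbij := hbij,
      hlaw := by
        intro a1 ha1 b hb
        refine ⟨(hlawS a1 ha1 b hb).1, fun hne => ?_⟩
        exact (hC0z _).mp ((hlawS a1 ha1 b hb).2 hne),
      hE := by
        intro s
        rcases hES s with h1 | h1
        · left; exact h1
        · right; exact hsplit s h1 }
  exact HMAux.BCtx.main c n (fun i => ρ [i]) V hfold ⟨hC1, fun h0 => hVz ((hC0z V).mp h0)⟩
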